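/- Let k ≥ 1. For every (k+1)-core γ, the sequence p(γ) is a k-bounded partition, and the map γ ↦ p(γ) is a bijection from the set of all (k+1)-cores onto the set of all k-bounded partitions. -/

import Mathlib

/-- A partition, encoded as a weakly decreasing, eventually zero sequence of
nonnegative integers (0-indexed: part `i+1` of the partition is `l i`). -/
def IsPartition (l : ℕ → ℕ) : Prop :=
  Antitone l ∧ ∃ N, ∀ m, N ≤ m → l m = 0

/-- `l` is a partition of `d`: weakly decreasing, eventually zero, parts summing to `d`. -/
def IsPartitionOf (d : ℕ) (l : ℕ → ℕ) : Prop :=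
  Antitone l ∧ ∃ N, (∀ m, N ≤ m → l m = 0) ∧ ∑ i ∈ Finset.range N, l i = d

/-- Dominance order: `Dominates lam mu` means `mu ⊴ lam`, i.e. every partial sum of `mu`
is at most the corresponding partial sum of `lam`. -/
def Dominates (lam mu : ℕ → ℕ) : Prop :=
  ∀ i, ∑ t ∈ Finset.range i, mu t ≤ ∑ t ∈ Finset.range i, lam t

/-- The cell in row `i`, column `j` (0-indexed) belongs to the Young diagram of `l`
iff `j < l i`.  The hook length of such a cell: 1 + #cells strictly to its right in its
row + #cells strictly above it in its column; for `j < l i` this equals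
`(l i - j) + #{i' > i | j < l i'}`. -/
noncomputable def hook (l : ℕ → ℕ) (i j : ℕ) : ℕ :=
  (l i - j) + Nat.card {i' : ℕ // i < i' ∧ j < l i'}

/-- `l` is a `(k+1)`-core: a partition none of whose cells has hook length `k+1`. -/
def IsCore (k : ℕ) (l : ℕ → ℕ) : Prop :=
  IsPartition l ∧ ∀ i j, j < l i → hook l i j ≠ k + 1

/-- The `(k+1)`-residue of the cell in row `i`, column `j`: `(j - i) mod (k+1)`. -/
def residue (k i j : ℕ) : ZMod (k + 1) :=
  (j : ZMod (k + 1)) - (i : ZMod (k + 1))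

/-- `(i,j)` is a top cell of `l`: it lies in the diagram but the cell above it does not. -/
def IsTopCell (l : ℕ → ℕ) (i j : ℕ) : Prop :=
  j < l i ∧ l (i + 1) ≤ j

/-- `(i,j)` is a removable corner of `l`: a cell with no cell above it nor to its right. -/
def IsRemovableCorner (l : ℕ → ℕ) (i j : ℕ) : Prop :=
  j + 1 = l i ∧ l (i + 1) ≤ j

/-- For top cells `c' = (i',j')` and `c = (i,j)` with `c` weakly southeast of `c'`,
`hBetween l i' j' i j` is `#{x | i ≤ x ≤ i', (x,j') ∈ l} + #{y | j'+1 ≤ y ≤ j, (i,y) ∈ l}`. -/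
def hBetween (l : ℕ → ℕ) (i' j' i j : ℕ) : ℕ :=
  ((Finset.Icc i i').filter (fun x => j' < l x)).card +
    ((Finset.Icc (j' + 1) j).filter (fun y => y < l i)).card

/-- `pMap k l i` is the number of cells in row `i` of `l` with hook length at most `k`;
the sequence `pMap k l` is `p(l)`. -/
noncomputable def pMap (k : ℕ) (l : ℕ → ℕ) (i : ℕ) : ℕ :=
  ((Finset.range (l i)).filter (fun j => hook l i j ≤ k)).card

/-- A semistandard Young tableau of shape `l`, with 0-indexed entries (entry `m`
represents the letter `m+1`): rows weakly increase, columns strictly increase,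
and (as a normalization) entries outside the diagram are `0`. -/
structure SSYT (l : ℕ → ℕ) where
  entry : ℕ → ℕ → ℕ
  rowWeak : ∀ i j, j + 1 < l i → entry i j ≤ entry i (j + 1)
  colStrict : ∀ i j, j < l (i + 1) → entry i j < entry (i + 1) j
  zero_outside : ∀ i j, l i ≤ j → entry i j = 0

/-- The weight of an SSYT: `T.weight m` is the number of cells of the diagram
whose entry is `m`. -/
noncomputable def SSYT.weight {l : ℕ → ℕ} (T : SSYT l) (m : ℕ) : ℕ :=
  Nat.card {p : ℕ × ℕ // p.2 < l p.1 ∧ T.entry p.1 p.2 = m}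

/-- The `k`-weight of an SSYT: `T.kweight k m` is the number of distinct
`(k+1)`-residues among the cells whose entry is `m`. -/
noncomputable def SSYT.kweight {l : ℕ → ℕ} (T : SSYT l) (k m : ℕ) : ℕ :=
  Nat.card {r : ZMod (k + 1) // ∃ i j, j < l i ∧ T.entry i j = m ∧ residue k i j = r}

/-- The coefficient of the monomial with exponent vector `α` in `f`. -/
noncomputable def coeffOf {n : ℕ} (f : MvPolynomial (Fin n) ℝ) (α : Fin n → ℕ) : ℝ :=
  f.coeff (Finsupp.equivFunOnFinite.symm α)

/-- `f` is the Schur polynomial of shape `l` in `x_1, …, x_n`: the coefficient of `x^α`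
is the number of SSYT of shape `l` with entries among the `n` letters whose weight is `α`. -/
def IsSchurPoly (n : ℕ) (l : ℕ → ℕ) (f : MvPolynomial (Fin n) ℝ) : Prop :=
  ∀ α : Fin n → ℕ,
    coeffOf f α =
      (Nat.card {T : SSYT l // (∀ i j, j < l i → T.entry i j < n) ∧
        ∀ m : Fin n, T.weight (m : ℕ) = α m} : ℝ)

/-- `f` is the dual `k`-Schur polynomial of shape the `(k+1)`-core `l` in `x_1, …, x_n`:
the coefficient of `x^α` is the number of SSYT of shape `l` with entries among the `n`
letters whose `k`-weight is `α`. -/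
def IsDualKSchurPoly (n k : ℕ) (l : ℕ → ℕ) (f : MvPolynomial (Fin n) ℝ) : Prop :=
  ∀ α : Fin n → ℕ,
    coeffOf f α =
      (Nat.card {T : SSYT l // (∀ i j, j < l i → T.entry i j < n) ∧
        ∀ m : Fin n, T.kweight k (m : ℕ) = α m} : ℝ)

/-- The Newton polytope of `f`: the convex hull in `ℝ^n` of the exponent vectors of the
monomials of `f` with nonzero coefficient. -/
noncomputable def newtonPolytope {n : ℕ} (f : MvPolynomial (Fin n) ℝ) : Set (Fin n → ℝ) :=
  convexHull ℝ {x | ∃ α : Fin n → ℕ, coeffOf f α ≠ 0 ∧ x = fun i => (α i : ℝ)}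

/-- `f` has saturated Newton polytope: the lattice points of `Newton(f)` are exactly
the exponent vectors of `f`. -/
def HasSNP {n : ℕ} (f : MvPolynomial (Fin n) ℝ) : Prop :=
  ∀ x : Fin n → ℝ,
    (x ∈ newtonPolytope f ∧ ∀ i, ∃ m : ℤ, x i = (m : ℝ)) ↔
      ∃ α : Fin n → ℕ, coeffOf f α ≠ 0 ∧ x = fun i => (α i : ℝ)

/-- The `λ`-permutahedron in `ℝ^n`: the convex hull of all coordinate permutations of
`(l 0, …, l (n-1))`. -/
noncomputable def permutahedron (n : ℕ) (l : ℕ → ℕ) : Set (Fin n → ℝ) :=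
  convexHull ℝ {v : Fin n → ℝ | ∃ σ : Equiv.Perm (Fin n), ∀ i, v i = (l (σ i).val : ℝ)}

/-- A subset `J ⊆ ℕ^n` is M-convex. -/
def MConvex {n : ℕ} (J : Set (Fin n → ℕ)) : Prop :=
  ∀ α ∈ J, ∀ β ∈ J, ∀ i : Fin n, β i < α i →
    ∃ j : Fin n, α j < β j ∧
      (fun t => if t = i then α t - 1 else if t = j then α t + 1 else α t) ∈ J

/-- `sort(α) ⊴ lam`: some weakly decreasing rearrangement of `α` (padded with zeros)
is dominated by `lam`. -/
def SortDominatedBy (n : ℕ) (α : Fin n → ℕ) (lam : ℕ → ℕ) : Prop :=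
  ∃ β : ℕ → ℕ, Antitone β ∧ (∀ m, n ≤ m → β m = 0) ∧
    (∃ σ : Equiv.Perm (Fin n), ∀ i : Fin n, β i = α (σ i)) ∧
    Dominates lam β


namespace PCoreAux

open Finset

/-! ### Abstract per-row theory -/

def phiF (f : ℕ → ℕ) (j : ℕ) : ℤ := (j : ℤ) - f j

def CfA (k : ℕ) (f : ℕ → ℕ) (a : ℕ) : Prop := ∀ j, phiF f j ≠ (a : ℤ) - (k + 1)

noncomputable def PfA (k : ℕ) (f : ℕ → ℕ) (a : ℕ) : ℕ :=
  ((Finset.range a).filter fun j => (a : ℤ) - k ≤ phiF f j).card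

noncomputable def phatA (k : ℕ) (f : ℕ → ℕ) (t : ℕ) : ℕ :=
  ((Finset.range t).filter fun j => (t : ℤ) - (k + 1) ≤ phiF f j).card

noncomputable def jminA (f : ℕ → ℕ) (c : ℤ) : ℕ := sInf {j : ℕ | c ≤ phiF f j}

variable {k : ℕ} {f : ℕ → ℕ} {t : ℕ}

lemma phiF_le (f : ℕ → ℕ) (j : ℕ) : phiF f j ≤ (j : ℤ) := by
  unfold phiF; omega

lemma phiF_succ_ge (hf : Antitone f) (j : ℕ) : phiF f j + 1 ≤ phiF f (j + 1) := by
  have := hf (show j ≤ j + 1 by omega); unfold phiF; omega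

lemma phiF_mono (hf : Antitone f) : Monotone (phiF f) :=
  (strictMono_nat_of_lt_succ (fun j => by have := phiF_succ_ge hf j; omega)).monotone

lemma phiF_inj (hf : Antitone f) : Function.Injective (phiF f) :=
  (strictMono_nat_of_lt_succ (fun j => by have := phiF_succ_ge hf j; omega)).injective

lemma phiF_add_le (hf : Antitone f) (j s : ℕ) : phiF f j + s ≤ phiF f (j + s) := by
  induction s with
  | zero => simp
  | succ s ih =>
    have h2 := phiF_succ_ge hf (j + s)
    have : j + (s + 1) = (j + s) + 1 := rfl
    rw [this]; push_cast; push_cast at ih; omega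

lemma phiF_eq (hft : ∀ j, t ≤ j → f j = 0) {j : ℕ} (hj : t ≤ j) : phiF f j = j := by
  unfold phiF; rw [hft j hj]; simp

lemma exists_le_phiF (hft : ∀ j, t ≤ j → f j = 0) (c : ℤ) : ∃ j, c ≤ phiF f j := by
  refine ⟨t + c.toNat, ?_⟩
  rw [phiF_eq hft (Nat.le_add_right _ _)]
  have := Int.self_le_toNat c; push_cast; omega

lemma jmin_spec (hft : ∀ j, t ≤ j → f j = 0) (c : ℤ) : c ≤ phiF f (jminA f c) :=
  Nat.sInf_mem (exists_le_phiF hft c)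

lemma jmin_le {c : ℤ} {j : ℕ} (h : c ≤ phiF f j) : jminA f c ≤ j :=
  Nat.sInf_le h

lemma filter_card (hf : Antitone f) (hft : ∀ j, t ≤ j → f j = 0) (c : ℤ) (a : ℕ)
    (ha : c ≤ phiF f a) :
    ((Finset.range a).filter fun j => c ≤ phiF f j).card = a - jminA f c ∧ jminA f c ≤ a := by
  have hja : jminA f c ≤ a := jmin_le ha
  have hset : ((Finset.range a).filter fun j => c ≤ phiF f j) = Finset.Ico (jminA f c) a := by
    ext j
    simp only [Finset.mem_filter, Finset.mem_range, Finset.mem_Ico]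
    constructor
    · rintro ⟨h1, h2⟩; exact ⟨jmin_le h2, h1⟩
    · rintro ⟨h1, h2⟩
      exact ⟨h2, le_trans (jmin_spec hft c) (phiF_mono hf h1)⟩
  rw [hset, Nat.card_Ico]; exact ⟨rfl, hja⟩

lemma UPgen (hf : Antitone f) (hft : ∀ j, t ≤ j → f j = 0) (a b : ℕ) (hba : b ≤ a)
    (hCa : CfA k f a) :
    jminA f ((a : ℤ) - k) ≤ jminA f ((b : ℤ) - (k + 1)) + (a - b) := by
  set j := jminA f ((b : ℤ) - (k + 1)) with hj
  have h1 : (b : ℤ) - (k + 1) ≤ phiF f j := jmin_spec hft _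
  have h2 : phiF f j + ((a - b : ℕ) : ℤ) ≤ phiF f (j + (a - b)) := phiF_add_le hf j (a - b)
  have hcast : ((a - b : ℕ) : ℤ) = (a : ℤ) - b := by omega
  have h4 : phiF f (j + (a - b)) ≠ (a : ℤ) - (k + 1) := hCa _
  exact jmin_le (by omega)

lemma LOgen (hf : Antitone f) (hft : ∀ j, t ≤ j → f j = 0) (b a : ℕ) (hba : b ≤ a)
    (hmid : ∀ c : ℕ, b ≤ c → c < a → ∃ j, phiF f j = (c : ℤ) - (k + 1)) :
    jminA f ((b : ℤ) - (k + 1)) + (a - b) ≤ jminA f ((a : ℤ) - k) := by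
  set J := jminA f ((a : ℤ) - k) with hJ
  set jh := jminA f ((b : ℤ) - (k + 1)) with hjh
  have hspecJ : (a : ℤ) - k ≤ phiF f J := jmin_spec hft _
  have hmono : jh ≤ J := jmin_le (by omega)
  set g : ℕ → ℕ := fun c => if h : b ≤ c ∧ c < a then Classical.choose (hmid c h.1 h.2) else 0
    with hg
  have hgspec : ∀ c, b ≤ c → c < a → phiF f (g c) = (c : ℤ) - (k + 1) := by
    intro c h1 h2
    have : g c = Classical.choose (hmid c h1 h2) := by
      rw [hg]; simp only [dif_pos (And.intro h1 h2)]
    rw [this]; exact Classical.choose_spec (hmid c h1 h2)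
  have hcard : (Finset.Ico b a).card ≤ (Finset.Ico jh J).card := by
    apply Finset.card_le_card_of_injOn g
    · intro c hc
      simp only [Finset.mem_coe, Finset.mem_Ico] at hc ⊢
      have hsp := hgspec c hc.1 hc.2
      constructor
      · exact jmin_le (by omega)
      · by_contra h
        push_neg at h
        have := phiF_mono hf h
        omega
    · intro c hc c' hc' he
      simp only [Finset.coe_Ico, Set.mem_Ico] at hc hc'
      have h1 := hgspec c hc.1 hc.2
      have h2 := hgspec c' hc'.1 hc'.2
      rw [he] at h1; omega
  rw [Nat.card_Ico, Nat.card_Ico] at hcard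
  omega

lemma Pf_le_k (hf : Antitone f) (hft : ∀ j, t ≤ j → f j = 0) {a : ℕ} (ha : t ≤ a) :
    PfA k f a ≤ k := by
  have haφ : (a : ℤ) - k ≤ phiF f a := by rw [phiF_eq hft ha]; omega
  obtain ⟨h1, h2⟩ := filter_card hf hft ((a : ℤ) - k) a haφ
  have h3 : (a : ℤ) - k ≤ (jminA f ((a : ℤ) - k) : ℤ) :=
    le_trans (jmin_spec hft _) (phiF_le f _)
  unfold PfA; omega

lemma phat_eq (hf : Antitone f) (hft : ∀ j, t ≤ j → f j = 0) :
    phatA k f t = t - jminA f ((t : ℤ) - (k + 1)) ∧ jminA f ((t : ℤ) - (k + 1)) ≤ t := by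
  have h : (t : ℤ) - (k + 1) ≤ phiF f t := by rw [phiF_eq hft le_rfl]; omega
  exact filter_card hf hft _ t h

lemma Pf_eq (hf : Antitone f) (hft : ∀ j, t ≤ j → f j = 0) {a : ℕ} (ha : t ≤ a) :
    PfA k f a = a - jminA f ((a : ℤ) - k) ∧ jminA f ((a : ℤ) - k) ≤ a := by
  have h : (a : ℤ) - k ≤ phiF f a := by rw [phiF_eq hft ha]; omega
  exact filter_card hf hft _ a h

lemma A_mono (hf : Antitone f) (hft : ∀ j, t ≤ j → f j = 0) {a : ℕ} (ha : t ≤ a)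
    (hCa : CfA k f a) : phatA k f t ≤ PfA k f a := by
  obtain ⟨hp1, hp2⟩ := phat_eq (k := k) hf hft
  obtain ⟨hq1, hq2⟩ := Pf_eq (k := k) hf hft ha
  have h3 := UPgen hf hft a t ha hCa
  omega

lemma A_lt (hf : Antitone f) (hft : ∀ j, t ≤ j → f j = 0) {a a' : ℕ} (ha : t ≤ a)
    (haa : a < a') (hCa' : CfA k f a') : PfA k f a < PfA k f a' := by
  have e : ((a + 1 : ℕ) : ℤ) - (k + 1) = (a : ℤ) - k := by push_cast; ring
  have h := UPgen hf hft a' (a + 1) haa hCa'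
  rw [e] at h
  obtain ⟨hq1, hq2⟩ := Pf_eq (k := k) hf hft ha
  obtain ⟨hq1', hq2'⟩ := Pf_eq (k := k) hf hft (le_trans ha haa.le)
  omega

lemma A_inj (hf : Antitone f) (hft : ∀ j, t ≤ j → f j = 0) {a a' : ℕ} (ha : t ≤ a)
    (ha' : t ≤ a') (hCa : CfA k f a) (hCa' : CfA k f a') (hP : PfA k f a = PfA k f a') :
    a = a' := by
  rcases lt_trichotomy a a' with h | h | h
  · have := A_lt hf hft ha h hCa'; omega
  · exact h
  · have := A_lt hf hft ha' h hCa; omega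

lemma A_gap (hf : Antitone f) (hft : ∀ j, t ≤ j → f j = 0) {b a : ℕ} (hb : t ≤ b)
    (hba : b < a) (hmid : ∀ c : ℕ, b < c → c < a → ∃ j, phiF f j = (c : ℤ) - (k + 1)) :
    PfA k f a ≤ PfA k f b + 1 := by
  have e : ((b + 1 : ℕ) : ℤ) - (k + 1) = (b : ℤ) - k := by push_cast; ring
  have h := LOgen hf hft (b + 1) a hba (fun c hc1 hc2 => hmid c hc1 hc2)
  rw [e] at h
  obtain ⟨hq1, hq2⟩ := Pf_eq (k := k) hf hft hb
  obtain ⟨hq1', hq2'⟩ := Pf_eq (k := k) hf hft (le_trans hb hba.le)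
  omega

lemma A_start (hf : Antitone f) (hft : ∀ j, t ≤ j → f j = 0) {a : ℕ} (ha : t ≤ a)
    (hmid : ∀ c : ℕ, t ≤ c → c < a → ∃ j, phiF f j = (c : ℤ) - (k + 1)) :
    PfA k f a ≤ phatA k f t := by
  have h := LOgen hf hft t a ha hmid
  obtain ⟨hp1, hp2⟩ := phat_eq (k := k) hf hft
  obtain ⟨hq1, hq2⟩ := Pf_eq (k := k) hf hft ha
  omega

lemma A_top (hf : Antitone f) (hft : ∀ j, t ≤ j → f j = 0)
    (h1 : t ≠ 0 → f (t - 1) ≠ 0) :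
    CfA k f (t + k) ∧ PfA k f (t + k) = k := by
  constructor
  · intro j hc
    have he : ((t + k : ℕ) : ℤ) - (k + 1) = (t : ℤ) - 1 := by push_cast; ring
    rw [he] at hc
    rcases le_or_gt t j with h | h
    · rw [phiF_eq hft h] at hc; omega
    · have ht0 : t ≠ 0 := by omega
      have hfj : 1 ≤ f j := by
        have := hf (show j ≤ t - 1 by omega)
        have := h1 ht0
        omega
      unfold phiF at hc; omega
  · obtain ⟨hq1, hq2⟩ := Pf_eq (k := k) hf hft (Nat.le_add_right t k)
    have he : ((t + k : ℕ) : ℤ) - k = (t : ℤ) := by push_cast; ring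
    rw [he] at hq1 hq2
    have hjt : jminA f (t : ℤ) = t := by
      have hle : jminA f (t : ℤ) ≤ t := jmin_le (by rw [phiF_eq hft le_rfl])
      have hge : (t : ℤ) ≤ (jminA f (t : ℤ) : ℤ) :=
        le_trans (jmin_spec hft _) (phiF_le f _)
      omega
    omega

lemma A_surj (hf : Antitone f) (hft : ∀ j, t ≤ j → f j = 0)
    (h1 : t ≠ 0 → f (t - 1) ≠ 0) :
    ∀ v, phatA k f t ≤ v → v ≤ k → ∃ a, t ≤ a ∧ CfA k f a ∧ PfA k f a = v := by
  suffices H : ∀ s v, phatA k f t ≤ v → v ≤ k → k - v ≤ s →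
      ∃ a, t ≤ a ∧ CfA k f a ∧ PfA k f a = v by
    intro v hv1 hv2; exact H (k - v) v hv1 hv2 le_rfl
  intro s
  induction s with
  | zero =>
    intro v hv1 hv2 hs
    have hv : v = k := by omega
    obtain ⟨hc, hp⟩ := A_top (k := k) hf hft h1
    exact ⟨t + k, Nat.le_add_right _ _, hc, by omega⟩
  | succ s ih =>
    intro v hv1 hv2 hs
    rcases eq_or_lt_of_le hv2 with hvk | hvk
    · obtain ⟨hc, hp⟩ := A_top (k := k) hf hft h1
      exact ⟨t + k, Nat.le_add_right _ _, hc, by omega⟩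
    · obtain ⟨a, hta, hCa, hPa⟩ := ih (v + 1) (by omega) (by omega) (by omega)
      by_cases hex : ∃ b, t ≤ b ∧ b < a ∧ CfA k f b
      · classical
        obtain ⟨b0, hb0t, hb0a, hb0C⟩ := hex
        set P : ℕ → Prop := fun c => t ≤ c ∧ CfA k f c with hP
        have hb0 : b0 ≤ a - 1 := by omega
        set b := Nat.findGreatest P (a - 1) with hb
        have hPb : P b := Nat.findGreatest_spec hb0 ⟨hb0t, hb0C⟩
        have hba : b ≤ a - 1 := Nat.findGreatest_le _
        have hb_lt : b < a := by omega
        have hmid : ∀ c, b < c → c < a → ∃ j, phiF f j = (c : ℤ) - (k + 1) := by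
          intro c hc1 hc2
          have hng := Nat.findGreatest_is_greatest (P := P) (n := a - 1) hc1 (by omega)
          have hCc : ¬ CfA k f c := fun h => hng ⟨le_trans hPb.1 hc1.le, h⟩
          unfold CfA at hCc; push_neg at hCc; exact hCc
        have g1 : PfA k f a ≤ PfA k f b + 1 := A_gap hf hft hPb.1 hb_lt hmid
        have g2 : PfA k f b < PfA k f a := A_lt hf hft hPb.1 hb_lt hCa
        exact ⟨b, hPb.1, hPb.2, by omega⟩
      · exfalso
        push_neg at hex
        have hmid : ∀ c, t ≤ c → c < a → ∃ j, phiF f j = (c : ℤ) - (k + 1) := by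
          intro c hc1 hc2
          have hCc : ¬ CfA k f c := fun h => (hex c hc1 hc2) h
          unfold CfA at hCc; push_neg at hCc; exact hCc
        have := A_start hf hft hta hmid
        omega


/-! ### Bridge between `hook`/`pMap` and the abstract theory -/


noncomputable def ffC (l : ℕ → ℕ) (i j : ℕ) : ℕ := Nat.card {i' : ℕ // i < i' ∧ j < l i'}

lemma hook_eq (l : ℕ → ℕ) (i j : ℕ) : hook l i j = (l i - j) + ffC l i j := rfl

lemma ffC_eq (l : ℕ → ℕ) (N : ℕ) (hN : ∀ m, N ≤ m → l m = 0) (i j : ℕ) :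
    ffC l i j = ((Finset.Ioo i N).filter fun i' => j < l i').card := by
  have h0 : ffC l i j = Set.ncard {i' : ℕ | i < i' ∧ j < l i'} := Nat.card_coe_set_eq _
  rw [h0]
  have hset : {i' : ℕ | i < i' ∧ j < l i'} =
      ↑((Finset.Ioo i N).filter fun i' => j < l i') := by
    ext x
    simp only [Set.mem_setOf_eq, Finset.coe_filter, Finset.mem_Ioo]
    constructor
    · rintro ⟨h1, h2⟩
      refine ⟨⟨h1, ?_⟩, h2⟩
      by_contra h; push_neg at h; rw [hN x h] at h2; omega
    · rintro ⟨⟨h1, _⟩, h2⟩; exact ⟨h1, h2⟩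
  rw [hset, Set.ncard_coe_finset]

lemma ffC_antitone (l : ℕ → ℕ) (N : ℕ) (hN : ∀ m, N ≤ m → l m = 0) (i : ℕ) :
    Antitone (ffC l i) := by
  intro j j' hjj
  rw [ffC_eq l N hN, ffC_eq l N hN]
  apply Finset.card_le_card
  intro x hx
  simp only [Finset.mem_filter, Finset.mem_Ioo] at hx ⊢
  exact ⟨hx.1, by omega⟩

lemma ffC_zero (l : ℕ → ℕ) (hl : Antitone l) (i j : ℕ) (hj : l (i + 1) ≤ j) :
    ffC l i j = 0 := by
  have : IsEmpty {i' : ℕ // i < i' ∧ j < l i'} := by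
    constructor; rintro ⟨x, hx1, hx2⟩
    have := hl (show i + 1 ≤ x from hx1)
    omega
  exact Nat.card_of_isEmpty

lemma ffC_ne_zero (l : ℕ → ℕ) (N : ℕ) (hN : ∀ m, N ≤ m → l m = 0) (i : ℕ)
    (ht : l (i + 1) ≠ 0) : ffC l i (l (i + 1) - 1) ≠ 0 := by
  rw [ffC_eq l N hN]
  have hiN : i + 1 < N := by by_contra h; push_neg at h; exact ht (hN _ h)
  apply Finset.card_ne_zero_of_mem (a := i + 1)
  simp only [Finset.mem_filter, Finset.mem_Ioo]
  omega

lemma ffC_succ (l : ℕ → ℕ) (N : ℕ) (hN : ∀ m, N ≤ m → l m = 0) (i j : ℕ)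
    (hj : j < l (i + 1)) : ffC l i j = ffC l (i + 1) j + 1 := by
  rw [ffC_eq l N hN, ffC_eq l N hN]
  have hiN : i + 1 < N := by by_contra h; push_neg at h; rw [hN _ h] at hj; omega
  have hins : (Finset.Ioo i N).filter (fun i' => j < l i') =
      insert (i + 1) ((Finset.Ioo (i + 1) N).filter fun i' => j < l i') := by
    ext x
    simp only [Finset.mem_filter, Finset.mem_Ioo, Finset.mem_insert]
    constructor
    · rintro ⟨⟨h1, h2⟩, h3⟩
      rcases eq_or_lt_of_le (show i + 1 ≤ x from h1) with h | h
      · exact Or.inl h.symm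
      · exact Or.inr ⟨⟨h, h2⟩, h3⟩
    · rintro (rfl | ⟨⟨h1, h2⟩, h3⟩)
      · exact ⟨⟨Nat.lt_succ_self i, hiN⟩, hj⟩
      · exact ⟨⟨by omega, h2⟩, h3⟩
  rw [hins, Finset.card_insert_of_notMem (by simp)]

lemma ffC_congr (l l' : ℕ → ℕ) (i : ℕ) (h : ∀ i', i < i' → l i' = l' i') (j : ℕ) :
    ffC l i j = ffC l' i j := by
  apply Nat.card_congr
  apply Equiv.subtypeEquivRight
  intro x
  constructor
  · rintro ⟨h1, h2⟩; exact ⟨h1, by rw [← h x h1]; exact h2⟩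
  · rintro ⟨h1, h2⟩; exact ⟨h1, by rw [h x h1]; exact h2⟩

lemma hook_congr (l l' : ℕ → ℕ) (i : ℕ) (h : ∀ i', i ≤ i' → l i' = l' i') (j : ℕ) :
    hook l i j = hook l' i j := by
  rw [hook_eq, hook_eq, h i le_rfl, ffC_congr l l' i (fun i' hi' => h i' hi'.le) j]

lemma pMap_congr (k : ℕ) (l l' : ℕ → ℕ) (i : ℕ) (h : ∀ i', i ≤ i' → l i' = l' i') :
    pMap k l i = pMap k l' i := by
  unfold pMap
  rw [show l i = l' i from h i le_rfl]
  apply congrArg Finset.card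
  apply Finset.filter_congr
  intro j _
  rw [hook_congr l l' i h j]

lemma bridge_P (k : ℕ) (l : ℕ → ℕ) (N : ℕ) (hN : ∀ m, N ≤ m → l m = 0) (i : ℕ) :
    pMap k l i = PfA k (ffC l i) (l i) := by
  unfold pMap PfA
  apply congrArg Finset.card
  apply Finset.filter_congr
  intro j hj
  simp only [Finset.mem_range] at hj
  rw [hook_eq]
  unfold phiF
  omega

lemma bridge_phat (k : ℕ) (l : ℕ → ℕ) (N : ℕ) (hN : ∀ m, N ≤ m → l m = 0) (i : ℕ) :
    pMap k l (i + 1) = phatA k (ffC l i) (l (i + 1)) := by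
  unfold pMap phatA
  apply congrArg Finset.card
  apply Finset.filter_congr
  intro j hj
  simp only [Finset.mem_range] at hj
  rw [hook_eq]
  have hs := ffC_succ l N hN i j hj
  unfold phiF
  rw [hs]
  omega

lemma bridge_Cf (k : ℕ) (l : ℕ → ℕ) (hl : Antitone l) (i : ℕ) (hti : l (i + 1) ≤ l i) :
    (∀ j, j < l i → hook l i j ≠ k + 1) ↔ CfA k (ffC l i) (l i) := by
  constructor
  · intro h j hc
    unfold phiF at hc
    by_cases hj : j < l i
    · apply h j hj
      rw [hook_eq]
      omega
    · push_neg at hj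
      have h0 : ffC l i j = 0 := ffC_zero l hl i j (le_trans hti hj)
      rw [h0] at hc
      push_cast at hc
      omega
  · intro h j hj hc
    have hx := h j
    unfold phiF at hx
    rw [hook_eq] at hc
    omega

/-! ### Global lemmas -/

lemma pMap_partition (k : ℕ) (l : ℕ → ℕ) (hcore : IsCore k l) :
    IsPartition (pMap k l) ∧ pMap k l 0 ≤ k := by
  obtain ⟨⟨hl, N, hN⟩, hhook⟩ := hcore
  have hbig : ∀ i, pMap k l (i + 1) ≤ pMap k l i := by
    intro i
    have hf := ffC_antitone l N hN i
    have hft : ∀ j, l (i + 1) ≤ j → ffC l i j = 0 := fun j hj => ffC_zero l hl i j hj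
    have hti : l (i + 1) ≤ l i := hl (Nat.le_succ i)
    have hC : CfA k (ffC l i) (l i) :=
      (bridge_Cf k l hl i hti).mp (fun j hj => hhook i j hj)
    rw [bridge_phat k l N hN i, bridge_P k l N hN i]
    exact A_mono hf hft hti hC
  refine ⟨⟨antitone_nat_of_succ_le hbig, ⟨N, ?_⟩⟩, ?_⟩
  · intro q hq
    have hle : pMap k l q ≤ (Finset.range (l q)).card := Finset.card_filter_le _ _
    rw [Finset.card_range, hN q hq] at hle
    omega
  · rw [bridge_P k l N hN 0]
    exact Pf_le_k (ffC_antitone l N hN 0) (fun j hj => ffC_zero l hl 0 j hj)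
      (hl (Nat.le_succ 0))

lemma inj_step (k : ℕ) (γ δ : ℕ → ℕ) (N : ℕ) (hγa : Antitone γ) (hδa : Antitone δ)
    (hγN : ∀ q, N ≤ q → γ q = 0) (hδN : ∀ q, N ≤ q → δ q = 0)
    (hγc : ∀ i j, j < γ i → hook γ i j ≠ k + 1)
    (hδc : ∀ i j, j < δ i → hook δ i j ≠ k + 1)
    (hp : pMap k γ = pMap k δ) (i : ℕ) (htail : ∀ i', i < i' → γ i' = δ i') :
    γ i = δ i := by
  have hff : ffC δ i = ffC γ i := funext fun j => (ffC_congr γ δ i htail j).symm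
  have ht : δ (i + 1) = γ (i + 1) := (htail (i + 1) (Nat.lt_succ_self i)).symm
  have hf := ffC_antitone γ N hγN i
  have hft : ∀ j, γ (i + 1) ≤ j → ffC γ i j = 0 := fun j hj => ffC_zero γ hγa i j hj
  have h1 : PfA k (ffC γ i) (γ i) = PfA k (ffC γ i) (δ i) := by
    calc PfA k (ffC γ i) (γ i) = pMap k γ i := (bridge_P k γ N hγN i).symm
    _ = pMap k δ i := by rw [hp]
    _ = PfA k (ffC δ i) (δ i) := bridge_P k δ N hδN i
    _ = PfA k (ffC γ i) (δ i) := by rw [hff]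
  have hCγ : CfA k (ffC γ i) (γ i) :=
    (bridge_Cf k γ hγa i (hγa (Nat.le_succ i))).mp (fun j hj => hγc i j hj)
  have hCδ : CfA k (ffC γ i) (δ i) := by
    have := (bridge_Cf k δ hδa i (hδa (Nat.le_succ i))).mp (fun j hj => hδc i j hj)
    rwa [hff] at this
  have ha' : γ (i + 1) ≤ δ i := by rw [← ht]; exact hδa (Nat.le_succ i)
  exact A_inj hf hft (hγa (Nat.le_succ i)) ha' hCγ hCδ h1

lemma pMap_injOn (k : ℕ) : Set.InjOn (pMap k) {l : ℕ → ℕ | IsCore k l} := by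
  intro γ hγ δ hδ hp
  obtain ⟨⟨hγa, N1, hN1⟩, hγc⟩ := hγ
  obtain ⟨⟨hδa, N2, hN2⟩, hδc⟩ := hδ
  have hγN : ∀ q, max N1 N2 ≤ q → γ q = 0 := fun q hq => hN1 q (by omega)
  have hδN : ∀ q, max N1 N2 ≤ q → δ q = 0 := fun q hq => hN2 q (by omega)
  have key : ∀ d i, max N1 N2 ≤ i + d → γ i = δ i := by
    intro d
    induction d with
    | zero => intro i h; rw [hγN i (by omega), hδN i (by omega)]
    | succ d ih =>
      intro i h
      exact inj_step k γ δ (max N1 N2) hγa hδa hγN hδN hγc hδc hp i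
        (fun i' hi' => ih i' (by omega))
  funext i
  exact key (max N1 N2) i (by omega)

lemma pMap_surj (k : ℕ) (m : ℕ → ℕ) (hma : Antitone m) (N : ℕ)
    (hmN : ∀ i, N ≤ i → m i = 0) (hm0 : m 0 ≤ k) :
    ∃ γ, IsCore k γ ∧ pMap k γ = m := by
  have build : ∀ d, ∃ γ : ℕ → ℕ, Antitone γ ∧ (∀ i, N ≤ i → γ i = 0) ∧
      (∀ i, N - d ≤ i → ∀ j, j < γ i → hook γ i j ≠ k + 1) ∧
      (∀ i, N - d ≤ i → pMap k γ i = m i) := by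
    intro d
    induction d with
    | zero =>
      refine ⟨fun _ => 0, fun _ _ _ => le_rfl, fun _ _ => rfl, ?_, ?_⟩
      · intro i hi j hj; exact absurd hj (Nat.not_lt_zero j)
      · intro i hi
        have hmz : m i = 0 := hmN i (by omega)
        simp [pMap, hmz]
    | succ d ih =>
      obtain ⟨γ, h1, h2, h3, h4⟩ := ih
      by_cases hd : N ≤ d
      · exact ⟨γ, h1, h2, fun i hi => h3 i (by omega), fun i hi => h4 i (by omega)⟩
      · push_neg at hd
        set i := N - (d + 1) with hidef
        have hi1 : i + 1 = N - d := by omega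
        have hiN : i < N := by omega
        have hf := ffC_antitone γ N h2 i
        have hft : ∀ j, γ (i + 1) ≤ j → ffC γ i j = 0 := fun j hj => ffC_zero γ h1 i j hj
        have hb3 : γ (i + 1) ≠ 0 → ffC γ i (γ (i + 1) - 1) ≠ 0 :=
          fun h0 => ffC_ne_zero γ N h2 i h0
        have hphat : phatA k (ffC γ i) (γ (i + 1)) = m (i + 1) := by
          rw [← bridge_phat k γ N h2 i]; exact h4 (i + 1) (by omega)
        obtain ⟨a, hta, hCa, hPa⟩ := A_surj hf hft hb3 (m i)
          (by rw [hphat]; exact hma (Nat.le_succ i))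
          (le_trans (hma (Nat.zero_le i)) hm0)
        set γ' : ℕ → ℕ := fun x => if x ≤ i then a else γ x with hγ'def
        have hγ'tail : ∀ i', i < i' → γ' i' = γ i' := fun i' hi' => if_neg (by omega)
        have hγ'i : γ' i = a := if_pos le_rfl
        have hγ'a : Antitone γ' := by
          apply antitone_nat_of_succ_le
          intro x
          rcases lt_trichotomy x i with h | h | h
          · rw [show γ' x = a from if_pos (by omega),
              show γ' (x + 1) = a from if_pos (by omega)]
          · rw [h, hγ'i, show γ' (i + 1) = γ (i + 1) from if_neg (by omega)]
            exact hta
          · rw [show γ' x = γ x from if_neg (by omega),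
              show γ' (x + 1) = γ (x + 1) from if_neg (by omega)]
            exact h1 (Nat.le_succ x)
        have hγ'N : ∀ x, N ≤ x → γ' x = 0 := by
          intro x hx
          rw [hγ'tail x (by omega)]; exact h2 x hx
        have hffγ' : ffC γ' i = ffC γ i :=
          funext fun j => ffC_congr γ' γ i (fun i' h => hγ'tail i' h) j
        have hγ'ti : γ' (i + 1) ≤ γ' i := by
          rw [hγ'i, hγ'tail (i + 1) (Nat.lt_succ_self i)]; exact hta
        refine ⟨γ', hγ'a, hγ'N, ?_, ?_⟩
        · intro i' hi' j hj
          by_cases he : i' = i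
          · subst he
            exact (bridge_Cf k γ' hγ'a i hγ'ti).mpr
              (by rw [hffγ', hγ'i]; exact hCa) j hj
          · have hlt : i < i' := by omega
            have hhe : hook γ' i' j = hook γ i' j :=
              hook_congr γ' γ i' (fun x hx => hγ'tail x (by omega)) j
            rw [hhe]
            have hj' : j < γ i' := by rwa [hγ'tail i' hlt] at hj
            exact h3 i' (by omega) j hj'
        · intro i' hi'
          by_cases he : i' = i
          · subst he
            rw [bridge_P k γ' N hγ'N i, hffγ', hγ'i]
            exact hPa
          · have hlt : i < i' := by omega
            rw [pMap_congr k γ' γ i' (fun x hx => hγ'tail x (by omega))]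
            exact h4 i' (by omega)
  obtain ⟨γ, h1, h2, h3, h4⟩ := build N
  exact ⟨γ, ⟨⟨h1, N, h2⟩, fun i j hj => h3 i (by omega) j hj⟩, funext fun i => h4 i (by omega)⟩

end PCoreAux

/-- `p` maps every `(k+1)`-core to a `k`-bounded partition, and is a
bijection from the set of `(k+1)`-cores onto the set of `k`-bounded partitions. -/
theorem pMap_bijOn_cores
    (k : ℕ) (hk : 1 ≤ k) :
    (∀ l : ℕ → ℕ, IsCore k l → IsPartition (pMap k l) ∧ pMap k l 0 ≤ k) ∧
    Set.BijOn (pMap k) {l : ℕ → ℕ | IsCore k l}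
      {m : ℕ → ℕ | IsPartition m ∧ m 0 ≤ k} := by
  refine ⟨fun l hl => PCoreAux.pMap_partition k l hl, ?_, PCoreAux.pMap_injOn k, ?_⟩
  · intro l hl
    exact PCoreAux.pMap_partition k l hl
  · intro m hm
    obtain ⟨⟨hma, N, hmN⟩, hm0⟩ := hm
    obtain ⟨γ, hγ, hpe⟩ := PCoreAux.pMap_surj k m hma N hmN hm0
    exact ⟨γ, hγ, hpe⟩
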